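/- arXiv:0806.4873 — 4 statements merged into one kernel-verified Lean document; each statement's English description precedes it below -/
import Mathlib

section
/- Φ(0) = √512/15, i.e., ∫₀^∞ y^{1/2} ( √(y(y+2)) − (y+1) + 1/(2y) ) dy = √512/15 = 16√2/15. -/
open Real MeasureTheory Set Filter Topology

noncomputable def phiD (y : ℝ) : ℝ := Real.sqrt (y + 2) - Real.sqrt y

noncomputable def phiF (y : ℝ) : ℝ := -phiD y - (phiD y)^3/12 + (phiD y)^5/40

lemma phiD_hasDerivAt {y : ℝ} (hy : 0 < y) :
    HasDerivAt phiD (1/(2*Real.sqrt (y+2)) - 1/(2*Real.sqrt y)) y := by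
  have h2 : HasDerivAt (fun x : ℝ => Real.sqrt (x + 2)) (1 / (2 * Real.sqrt (y + 2))) y := by
    have := (Real.hasDerivAt_sqrt (show y + 2 ≠ 0 by positivity)).comp y
      ((hasDerivAt_id y).add_const 2)
    simpa [Function.comp_def] using this
  exact h2.sub (Real.hasDerivAt_sqrt hy.ne')

lemma phiF_hasDerivAt {y : ℝ} (hy : 0 < y) :
    HasDerivAt phiF (Real.sqrt y * (Real.sqrt (y * (y + 2)) - (y + 1) + 1/(2*y))) y := by
  set a := Real.sqrt y with ha_def
  set b := Real.sqrt (y + 2) with hb_def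
  have ha0 : 0 < a := Real.sqrt_pos.2 hy
  have hb0 : 0 < b := Real.sqrt_pos.2 (by linarith)
  have ha : a ^ 2 = y := Real.sq_sqrt hy.le
  have hb : b ^ 2 = y + 2 := Real.sq_sqrt (by linarith)
  have hb2 : b ^ 2 = a ^ 2 + 2 := by rw [hb, ha]
  have hd : HasDerivAt phiD (1/(2*b) - 1/(2*a)) y := phiD_hasDerivAt hy
  have hF : HasDerivAt phiF
      (-(1/(2*b) - 1/(2*a)) - ((3:ℕ) * phiD y ^ 2 * (1/(2*b) - 1/(2*a)))/12
        + ((5:ℕ) * phiD y ^ 4 * (1/(2*b) - 1/(2*a)))/40) y :=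
    ((hd.neg).sub ((hd.pow 3).div_const 12)).add ((hd.pow 5).div_const 40)
  convert hF using 1
  have hdy : phiD y = b - a := rfl
  rw [hdy, Real.sqrt_mul hy.le, ← ha_def, ← hb_def, ← ha]
  push_cast
  field_simp
  linear_combination (60*b^3 - 240*a^1 - 300*a^1*b^2 + 660*a^2*b^1 + 60*a^3) * hb2

lemma phi_g_bounds {y : ℝ} (hy : 0 < y) :
    0 ≤ Real.sqrt y * (Real.sqrt (y * (y + 2)) - (y + 1) + 1/(2*y)) ∧
    Real.sqrt y * (Real.sqrt (y * (y + 2)) - (y + 1) + 1/(2*y)) ≤ 1/(2*Real.sqrt y) ∧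
    Real.sqrt y * (Real.sqrt (y * (y + 2)) - (y + 1) + 1/(2*y)) ≤ 1/(2*(Real.sqrt y)^3) := by
  set a := Real.sqrt y with ha_def
  set b := Real.sqrt (y + 2) with hb_def
  have ha0 : 0 < a := Real.sqrt_pos.2 hy
  have hb0 : 0 < b := Real.sqrt_pos.2 (by linarith)
  have ha : a ^ 2 = y := Real.sq_sqrt hy.le
  have hb : b ^ 2 = y + 2 := Real.sq_sqrt (by linarith)
  have hb2 : b ^ 2 = a ^ 2 + 2 := by rw [hb, ha]
  have hab : a < b := by
    have := Real.sqrt_lt_sqrt hy.le (show y < y + 2 by linarith)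
    rwa [← ha_def, ← hb_def] at this
  have hg : Real.sqrt y * (Real.sqrt (y * (y + 2)) - (y + 1) + 1/(2*y))
      = a^2*b - a^3 - a + 1/(2*a) := by
    rw [Real.sqrt_mul hy.le, ← ha_def, ← hb_def, ← ha]
    field_simp
    ring
  -- nonnegativity
  have hP : (2*a^3*b - 2*a^4 - 2*a^2 + 1) * (a+b)^2 = (b-a)*(b+3*a) := by
    linear_combination (-2*a^2 + 2*a^4 + 2*a^3*b) * hb2
  have hPpos : 0 < 2*a^3*b - 2*a^4 - 2*a^2 + 1 := by
    nlinarith [hP, mul_pos (sub_pos.2 hab) (show (0:ℝ) < b + 3*a by linarith),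
      sq_nonneg (a+b)]
  have hrel0 : (a^2*b - a^3 - a + 1/(2*a)) * (2*a) = 2*a^3*b - 2*a^4 - 2*a^2 + 1 := by
    field_simp
  have h0 : 0 ≤ a^2*b - a^3 - a + 1/(2*a) := by nlinarith [hrel0, hPpos, ha0]
  -- first upper bound
  have habub : a*b ≤ a^2 + 1 := by nlinarith [hb2, mul_pos ha0 hb0]
  have h1 : a^2*b - a^3 - a + 1/(2*a) ≤ 1/(2*a) := by
    nlinarith [mul_nonneg ha0.le (sub_nonneg.2 habub)]
  -- second upper bound
  have hS2 : (a-b)^2 ≤ 2 := by nlinarith [mul_le_mul_of_nonneg_left hab.le ha0.le, hb2]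
  have hQ : (2*a^5*b - 2*a^6 - 2*a^4 + a^2 - 1) * (a+b)^2 = -4 - (a^2-1)*(a-b)^2 := by
    linear_combination (-2 + 2*a^2 - 2*a^4 + 2*a^6 + 2*a^5*b) * hb2
  have hab2pos : (0:ℝ) < (a+b)^2 := by positivity
  have hQneg : 2*a^5*b - 2*a^6 - 2*a^4 + a^2 - 1 ≤ 0 := by
    nlinarith [hQ, hS2, mul_nonneg (sq_nonneg a) (sq_nonneg (a-b)), hab2pos]
  have hrel3 : (a^2*b - a^3 - a + 1/(2*a)) * (2*a^3) = 2*a^5*b - 2*a^6 - 2*a^4 + a^2 := by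
    field_simp
  have h2 : a^2*b - a^3 - a + 1/(2*a) ≤ 1/(2*a^3) := by
    rw [le_div_iff₀ (show (0:ℝ) < 2*a^3 by positivity), hrel3]
    linarith [hQneg]
  exact ⟨by rw [hg]; exact h0, by rw [hg]; exact h1, by rw [hg]; exact h2⟩

lemma phi_g_continuousOn :
    ContinuousOn (fun y : ℝ => Real.sqrt y * (Real.sqrt (y * (y + 2)) - (y + 1) + 1/(2*y)))
      (Ioi (0:ℝ)) := by
  apply ContinuousOn.mul Real.continuous_sqrt.continuousOn
  apply ContinuousOn.add
  · apply ContinuousOn.sub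
    · exact (Real.continuous_sqrt.comp
        (continuous_id.mul (continuous_id.add continuous_const))).continuousOn
    · exact (continuous_id.add continuous_const).continuousOn
  · exact continuousOn_const.div
      ((continuous_const.mul continuous_id).continuousOn)
      (fun x hx => by have hx' : (0:ℝ) < x := hx; positivity)

lemma sqrt_tendsto_atTop : Tendsto Real.sqrt atTop atTop := by
  refine tendsto_atTop_atTop.2 fun c => ⟨(max c 0)^2, fun x hx => ?_⟩
  calc c ≤ max c 0 := le_max_left _ _
    _ = Real.sqrt ((max c 0)^2) := (Real.sqrt_sq (le_max_right _ _)).symm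
    _ ≤ Real.sqrt x := Real.sqrt_le_sqrt hx

lemma phiD_tendsto : Tendsto phiD atTop (𝓝 0) := by
  have h1 : Tendsto (fun y : ℝ => (Real.sqrt y)⁻¹) atTop (𝓝 0) :=
    tendsto_inv_atTop_zero.comp sqrt_tendsto_atTop
  refine squeeze_zero' ?_ ?_ h1
  · filter_upwards [eventually_ge_atTop (0:ℝ)] with y hy
    exact sub_nonneg.2 (Real.sqrt_le_sqrt (by linarith))
  · filter_upwards [eventually_gt_atTop (0:ℝ)] with y hy
    have ha0 : 0 < Real.sqrt y := Real.sqrt_pos.2 hy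
    have hkey : Real.sqrt (y+2) ≤ Real.sqrt y + (Real.sqrt y)⁻¹ := by
      rw [show Real.sqrt y + (Real.sqrt y)⁻¹
          = Real.sqrt ((Real.sqrt y + (Real.sqrt y)⁻¹)^2) from
        (Real.sqrt_sq (by positivity)).symm]
      apply Real.sqrt_le_sqrt
      nlinarith [Real.sq_sqrt hy.le, sq_nonneg ((Real.sqrt y)⁻¹),
        mul_inv_cancel₀ ha0.ne']
    have : phiD y = Real.sqrt (y+2) - Real.sqrt y := rfl
    rw [this]; linarith

lemma phiF_tendsto : Tendsto phiF atTop (𝓝 0) := by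
  have hc : Tendsto (fun t : ℝ => -t - t^3/12 + t^5/40) (𝓝 0) (𝓝 0) := by
    have hcont : Continuous fun t : ℝ => -t - t^3/12 + t^5/40 := by continuity
    have := hcont.tendsto 0
    norm_num at this
    exact this
  exact hc.comp phiD_tendsto

lemma phi_g_integrableOn :
    IntegrableOn (fun y : ℝ => Real.sqrt y * (Real.sqrt (y * (y + 2)) - (y + 1) + 1/(2*y)))
      (Ioi (0:ℝ)) := by
  have hcont := phi_g_continuousOn
  rw [← Ioc_union_Ioi_eq_Ioi (zero_le_one (α := ℝ))]
  apply IntegrableOn.union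
  · -- on Ioc 0 1, dominate by y ^ (-(1/2))
    apply Integrable.mono' (g := fun y : ℝ => y ^ (-(1/2) : ℝ))
    · have := intervalIntegral.intervalIntegrable_rpow' (a := 0) (b := 1)
        (r := -(1/2)) (by norm_num)
      rwa [intervalIntegrable_iff_integrableOn_Ioc_of_le zero_le_one] at this
    · exact (hcont.mono Ioc_subset_Ioi_self).aestronglyMeasurable measurableSet_Ioc
    · filter_upwards [ae_restrict_mem measurableSet_Ioc] with y hy
      have hy0 : 0 < y := hy.1
      obtain ⟨hg0, hg1, -⟩ := phi_g_bounds hy0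
      have ht : 0 < Real.sqrt y := Real.sqrt_pos.2 hy0
      rw [Real.norm_eq_abs, abs_of_nonneg hg0]
      refine hg1.trans ?_
      have heq : y ^ (-(1/2) : ℝ) = (Real.sqrt y)⁻¹ := by
        rw [Real.rpow_neg hy0.le, Real.sqrt_eq_rpow]
      rw [heq, ← one_div]
      apply one_div_le_one_div_of_le ht
      linarith
  · -- on Ioi 1, dominate by y ^ (-(3/2))
    apply Integrable.mono' (g := fun y : ℝ => y ^ (-(3/2) : ℝ))
    · exact integrableOn_Ioi_rpow_of_lt (by norm_num) one_pos
    · exact (hcont.mono fun x (hx : x ∈ Ioi (1:ℝ)) => (lt_trans zero_lt_one hx : (0:ℝ) < x)).aestronglyMeasurable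
        measurableSet_Ioi
    · filter_upwards [ae_restrict_mem measurableSet_Ioi] with y hy
      have hy0 : (0:ℝ) < y := lt_trans zero_lt_one hy
      obtain ⟨hg0, -, hg2⟩ := phi_g_bounds hy0
      have ht : 0 < Real.sqrt y := Real.sqrt_pos.2 hy0
      rw [Real.norm_eq_abs, abs_of_nonneg hg0]
      refine hg2.trans ?_
      have h32 : y ^ ((3:ℝ)/2) = Real.sqrt y ^ 3 := by
        rw [Real.sqrt_eq_rpow, ← Real.rpow_natCast (y ^ ((1:ℝ)/2)) 3,
          ← Real.rpow_mul hy0.le]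
        norm_num
      have heq : y ^ (-(3/2) : ℝ) = (Real.sqrt y ^ 3)⁻¹ := by
        rw [show (-(3/2):ℝ) = -((3:ℝ)/2) by norm_num, Real.rpow_neg hy0.le, h32]
      rw [heq, ← one_div]
      apply one_div_le_one_div_of_le (by positivity)
      nlinarith [pow_pos ht 3]

theorem phi_zero_value :
    ∫ y in Set.Ioi (0:ℝ),
        Real.sqrt y * (Real.sqrt (y * (y + 2)) - (y + 1) + 1/(2*y))
      = Real.sqrt 512 / 15 := by
  have hcont0 : ContinuousWithinAt phiF (Ici (0:ℝ)) 0 := by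
    apply Continuous.continuousWithinAt
    unfold phiF phiD
    continuity
  have key := integral_Ioi_of_hasDerivAt_of_tendsto (a := 0) (m := 0) hcont0
    (fun x hx => phiF_hasDerivAt (mem_Ioi.1 hx)) phi_g_integrableOn phiF_tendsto
  rw [key]
  have h512 : Real.sqrt 512 = 16 * Real.sqrt 2 := by
    rw [show (512:ℝ) = 16^2 * 2 by norm_num, Real.sqrt_mul (by positivity),
      Real.sqrt_sq (by norm_num)]
  have h2 : Real.sqrt 2 ^ 2 = 2 := Real.sq_sqrt (by norm_num)
  have hF0 : phiF 0 = -(Real.sqrt 2) - (Real.sqrt 2)^3/12 + (Real.sqrt 2)^5/40 := by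
    unfold phiF phiD
    norm_num
  rw [hF0, h512]
  linear_combination (-(1/40)*(Real.sqrt 2)^3 + (1/30)*Real.sqrt 2) * h2
end

section
/- For every y > 0 and h ≥ 0, the integrand y^{1/2} ( √((y+2h)(y+2+2h)) − (y+1+2h) + 1/(2y) ) is strictly positive. -/
open Real

theorem phi_integrand_pos (h y : ℝ) (hh : 0 ≤ h) (hy : 0 < y) :
    0 < Real.sqrt y *
      (Real.sqrt ((y + 2*h) * (y + 2 + 2*h)) - (y + 1 + 2*h) + 1/(2*y)) := by
  have hprod : 0 < (y + 2*h) * (y + 2 + 2*h) := by nlinarith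
  have hsy : 0 < Real.sqrt y := Real.sqrt_pos.mpr hy
  have key : (y + 1 + 2*h) - 1/(2*y) < Real.sqrt ((y + 2*h) * (y + 2 + 2*h)) := by
    rcases le_or_gt ((y + 1 + 2*h) - 1/(2*y)) 0 with hc | hc
    · exact lt_of_le_of_lt hc (Real.sqrt_pos.mpr hprod)
    · rw [show (y + 1 + 2*h) - 1/(2*y) = ((y + 1 + 2*h) - 1/(2*y)) from rfl]
      have := (Real.lt_sqrt hc.le).mpr (show ((y + 1 + 2*h) - 1/(2*y))^2 < (y + 2*h) * (y + 2 + 2*h) by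
        have h1 : 1 < 2*y*(y+1+2*h) := by
          have := hc
          rw [sub_pos, div_lt_iff₀ (by positivity : (0:ℝ) < 2*y)] at this
          linarith
        have hy2 : (1:ℝ)/(2*y) = 1/(2*y) := rfl
        have hinv : 1/(2*y) * (2*y) = 1 := by field_simp
        nlinarith [sq_nonneg (2*y-1), mul_nonneg hy.le hh, sq_nonneg (1/(2*y)), mul_pos hy hy])
      exact this
  have : 0 < Real.sqrt ((y + 2*h) * (y + 2 + 2*h)) - (y + 1 + 2*h) + 1/(2*y) := by
    linarith
  exact mul_pos hsy this
end

section
/- For real a, b, c with a + 2b > 0 and a + 2c > 0, one has (1/2)( √((a+2b)(a+2c)) − (a+b+c) ) ≤ F(e) for all e < 1/2, where F(e) = a e²/(1−2e) + b e/(1−2e) − c e. -/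
open Real

theorem lower_bound_quadratic_type (a b c : ℝ) (hab : 0 < a + 2*b) (hac : 0 < a + 2*c) :
    ∀ e : ℝ, e < 1/2 →
      (1/2) * (Real.sqrt ((a + 2*b) * (a + 2*c)) - (a + b + c))
        ≤ a * e^2 / (1 - 2*e) + b * e / (1 - 2*e) - c * e := by
  intro e he
  have ht : 0 < 1 - 2*e := by linarith
  set t := 1 - 2*e with htdef
  set s := Real.sqrt ((a + 2*b) * (a + 2*c)) with hsdef
  have hs : s^2 = (a + 2*b) * (a + 2*c) := Real.sq_sqrt (by positivity)
  have hsn : 0 ≤ s := Real.sqrt_nonneg _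
  clear_value t s
  have key : a * e^2 / t + b * e / t - c * e
      = (a+2*b)/(4*t) + (a+2*c)*t/4 - (a+b+c)/2 := by
    field_simp
    rw [htdef]
    ring
  have h2 : 2*t*s ≤ (a+2*b) + (a+2*c)*t^2 := by
    nlinarith [sq_nonneg (s - (a+2*c)*t), mul_pos hac ht]
  have h4 : (a+2*b)/(4*t) + (a+2*c)*t/4 = ((a+2*b) + (a+2*c)*t^2)/(4*t) := by
    field_simp
  have h3 : s/2 ≤ (a+2*b)/(4*t) + (a+2*c)*t/4 := by
    rw [h4, le_div_iff₀ (by positivity)]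
    have e1 : s / 2 * (4 * t) = 2 * t * s := by ring
    linarith [h2, e1]
  rw [key]; linarith [h3]
end

section
/- For all y > 0 and h ≥ 0: 0 < y^{1/2} ( 1/(2y) − 1/( √((y+2h)(y+2+2h)) + y + 1 + 2h ) ) ≤ min( y^{-1/2}/2, C y^{-3/2} ) for some constant C > 0 independent of y (C may depend on h). -/
open Real

theorem integrand_bounds (h : ℝ) (hh : 0 ≤ h) :
    ∃ C : ℝ, 0 < C ∧ ∀ y : ℝ, 0 < y →
      0 < Real.sqrt y *
            (1/(2*y) - 1/(Real.sqrt ((y + 2*h) * (y + 2 + 2*h)) + y + 1 + 2*h))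
        ∧ Real.sqrt y *
            (1/(2*y) - 1/(Real.sqrt ((y + 2*h) * (y + 2 + 2*h)) + y + 1 + 2*h))
          ≤ min (y ^ (-(1:ℝ)/2) / 2) (C * y ^ (-(3:ℝ)/2)) := by
  refine ⟨1 + 3*h + h^2, by nlinarith, fun y hy => ?_⟩
  have hC0 : (1:ℝ)/2 ≤ 1 + 3*h + h^2 := by nlinarith
  have hs : 0 < Real.sqrt y := Real.sqrt_pos.mpr hy
  set C := 1 + 3*h + h^2 with hCdef
  set s := Real.sqrt y with hsdef
  have hs2 : s^2 = y := Real.sq_sqrt hy.le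
  set S := Real.sqrt ((y + 2*h) * (y + 2 + 2*h)) with hSdef
  have hS0 : 0 ≤ S := Real.sqrt_nonneg _
  have hS2 : S^2 = (y + 2*h) * (y + 2 + 2*h) := Real.sq_sqrt (by nlinarith)
  clear_value C s S
  have hSy : y ≤ S := by nlinarith [sq_nonneg (S - y), sq_nonneg (S + y)]
  have hD : 0 < S + y + 1 + 2*h := by linarith
  have h2yD : 2*y < S + y + 1 + 2*h := by linarith
  have hsub : 0 < 1/(2*y) - 1/(S + y + 1 + 2*h) := by
    have := one_div_lt_one_div_of_lt (by linarith : (0:ℝ) < 2*y) h2yD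
    linarith
  have hpos : 0 < s * (1/(2*y) - 1/(S + y + 1 + 2*h)) := mul_pos hs hsub
  have hE1 : s * (1/(2*y) - 1/(S + y + 1 + 2*h)) ≤ 1/(2*s) := by
    have h1 : s * (1/(2*y) - 1/(S + y + 1 + 2*h)) ≤ s * (1/(2*y)) := by
      apply mul_le_mul_of_nonneg_left _ hs.le
      have : 0 < 1/(S + y + 1 + 2*h) := by positivity
      linarith
    have h2 : s * (1/(2*y)) = 1/(2*s) := by
      rw [eq_div_iff (by positivity)]
      field_simp
      nlinarith
    linarith [h1, h2.le, h2.ge]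
  have hhalf : y ^ (-(1:ℝ)/2) / 2 = 1/(2*s) := by
    rw [show (-(1:ℝ)/2) = -(1/2) by ring, Real.rpow_neg hy.le,
      ← Real.sqrt_eq_rpow, ← hsdef]
    field_simp
  have h32 : y ^ (-(3:ℝ)/2) = 1/(y*s) := by
    rw [show (-(3:ℝ)/2) = -(3/2) by ring, Real.rpow_neg hy.le,
      show (3:ℝ)/2 = 1 + 1/2 by norm_num, Real.rpow_add hy, Real.rpow_one,
      ← Real.sqrt_eq_rpow, ← hsdef]
    field_simp
  refine ⟨hpos, le_min ?_ ?_⟩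
  · rw [hhalf]; exact hE1
  · rw [h32, mul_one_div]
    rcases le_or_gt y 1 with hy1 | hy1
    · refine hE1.trans ?_
      rw [div_le_div_iff₀ (by positivity) (by positivity)]
      nlinarith
    · have hSle : S ≤ y + (3 + 10*h + 4*h^2) := by
        have hle : (y + 2*h) * (y + 2 + 2*h) ≤ (y + (3 + 10*h + 4*h^2))^2 := by
          nlinarith
        calc S = Real.sqrt ((y + 2*h) * (y + 2 + 2*h)) := hSdef
          _ ≤ Real.sqrt ((y + (3 + 10*h + 4*h^2))^2) := Real.sqrt_le_sqrt hle
          _ = y + (3 + 10*h + 4*h^2) := Real.sqrt_sq (by nlinarith)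
      have hfrac : s * (1/(2*y) - 1/(S + y + 1 + 2*h))
          = (s * ((S + y + 1 + 2*h) - 2*y)) / (2*y*(S + y + 1 + 2*h)) := by
        field_simp
      rw [hfrac, div_le_div_iff₀ (by positivity) (by positivity)]
      have key : y * ((S + y + 1 + 2*h) - 2*y) ≤ 2*C*(S + y + 1 + 2*h) := by
        have hDm : (S + y + 1 + 2*h) - 2*y ≤ 4*C := by
          rw [hCdef]; linarith
        have h1 : y * ((S + y + 1 + 2*h) - 2*y) ≤ y * (4*C) :=
          mul_le_mul_of_nonneg_left hDm hy.le
        have h2 : C * (2*y) ≤ C * (S + y + 1 + 2*h) :=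
          mul_le_mul_of_nonneg_left h2yD.le (by linarith)
        linarith [h1, h2]
      have key2 : y * (y * ((S + y + 1 + 2*h) - 2*y)) ≤ y * (2*C*(S + y + 1 + 2*h)) :=
        mul_le_mul_of_nonneg_left key hy.le
      have heq : s * ((S + y + 1 + 2*h) - 2*y) * (y*s)
          = y * (y*((S + y + 1 + 2*h) - 2*y)) := by
        linear_combination (y*((S + y + 1 + 2*h) - 2*y)) * hs2
      have heq2 : C * (2*y*(S + y + 1 + 2*h)) = y * (2*C*(S + y + 1 + 2*h)) := by ring
      rw [heq, heq2]
      exact key2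
end
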